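/- Let p^* : T → T_L be an exact functor of triangulated categories. For all σ, τ ∈ Stab(T_L)_p one has d(p_*σ, p_*τ) ≤ d(σ, τ) in [0,∞]; in particular the pushforward map p_* : Stab(T_L)_p → Stab(T), σ ↦ p_*σ, is continuous with respect to the topologies induced by the generalized metrics. -/

import Mathlib

open CategoryTheory Limits Pretriangulated ENNReal

noncomputable section

namespace StabilityPaper

universe v u v₂ u₂ v₃ u₃

/-- The data of a "prestability condition": a central charge, given as a function on
objects (which, when required to be additive on distinguished triangles, is the same
as a group homomorphism `K(T) → ℂ` on the Grothendieck group), and a collection of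
sets of objects `P φ` for `φ ∈ ℝ`. -/
structure PreStab (C : Type u) where
  Z : C → ℂ
  P : ℝ → Set C

section Triangulated

variable {C : Type u} [Category.{v} C] [Preadditive C] [HasZeroObject C] [HasShift C ℤ]
  [∀ n : ℤ, (shiftFunctor C n).Additive] [Pretriangulated C] [HasFiniteBiproducts C]

/-- A Harder–Narasimhan filtration of `E` with respect to the collection of
subcategories `P`: distinguished triangles `E_{i-1} → E_i → A_i` with `E_0 = 0`,
`E_n ≅ E`, `A_i` a nonzero object of `P (φ i)` and strictly decreasing phases `φ`. -/
structure HNFiltration (P : ℝ → Set C) (E : C) where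
  n : ℕ
  npos : 0 < n
  Fil : Fin (n + 1) → C
  A : Fin n → C
  phi : Fin n → ℝ
  fil_zero : IsZero (Fil 0)
  fil_last : Nonempty (Fil (Fin.last n) ≅ E)
  A_mem : ∀ i, A i ∈ P (phi i)
  A_ne : ∀ i, ¬ IsZero (A i)
  phi_anti : StrictAnti phi
  tri : ∀ i : Fin n, ∃ (f : Fil i.castSucc ⟶ Fil i.succ) (g : Fil i.succ ⟶ A i)
    (h : A i ⟶ (Fil i.castSucc)⟦(1 : ℤ)⟧), Triangle.mk f g h ∈ distTriang C

/-- The condition that the subcategories `P φ` are strictly full additive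
subcategories. -/
structure IsSlicing (P : ℝ → Set C) : Prop where
  iso_mem : ∀ (φ : ℝ) (X Y : C), Nonempty (X ≅ Y) → X ∈ P φ → Y ∈ P φ
  zero_mem : ∀ (φ : ℝ) (X : C), IsZero X → X ∈ P φ
  sum_mem : ∀ (φ : ℝ) (X Y : C), X ∈ P φ → Y ∈ P φ → (X ⊞ Y) ∈ P φ

/-- The axioms (SC1)-(SC4) of a stability condition on a triangulated category,
together with the requirements that the `P φ` are strictly full additive subcategories
and that `Z` is additive on distinguished triangles (i.e. descends to a group
homomorphism on the Grothendieck group). -/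
structure IsStabCond (σ : PreStab C) : Prop where
  slicing : IsSlicing σ.P
  zadd : ∀ T ∈ distTriang C, σ.Z T.obj₂ = σ.Z T.obj₁ + σ.Z T.obj₃
  sc1 : ∀ (φ : ℝ) (E : C), E ∈ σ.P φ → ¬ IsZero E →
    ∃ m : ℝ, 0 < m ∧ σ.Z E = (m : ℂ) * Complex.exp ((Real.pi : ℂ) * φ * Complex.I)
  sc2 : ∀ (φ : ℝ) (E : C), (E⟦(1 : ℤ)⟧ ∈ σ.P (φ + 1)) ↔ E ∈ σ.P φ
  sc3 : ∀ (φ₁ φ₂ : ℝ), φ₂ < φ₁ → ∀ E₁ ∈ σ.P φ₁, ∀ E₂ ∈ σ.P φ₂, ∀ f : E₁ ⟶ E₂, f = 0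
  sc4 : ∀ E : C, ¬ IsZero E → Nonempty (HNFiltration σ.P E)

/-- The extension-closed subcategory generated by a set of objects. -/
inductive extClosure (S : Set C) : C → Prop
  | of {X : C} : X ∈ S → extClosure S X
  | zero {X : C} : IsZero X → extClosure S X
  | iso {X Y : C} : (X ≅ Y) → extClosure S X → extClosure S Y
  | ext (T : Triangle C) (hT : T ∈ distTriang C) (h₁ : extClosure S T.obj₁)
      (h₃ : extClosure S T.obj₃) : extClosure S T.obj₂

/-- `A` is a strict subobject of `B` inside the subcategory `𝒜`: there is a
distinguished triangle `A → B → Q` with `Q` a nonzero object of `𝒜`. -/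
def StrictSubIn (𝒜 : Set C) (A B : C) : Prop :=
  A ∈ 𝒜 ∧ B ∈ 𝒜 ∧ ∃ (f : A ⟶ B) (Q : C) (g : B ⟶ Q) (h : Q ⟶ A⟦(1 : ℤ)⟧),
    Q ∈ 𝒜 ∧ ¬ IsZero Q ∧ Triangle.mk f g h ∈ distTriang C

/-- `B` is a strict quotient of `A` inside the subcategory `𝒜`: there is a
distinguished triangle `K → A → B` with `K` a nonzero object of `𝒜`. -/
def StrictQuotIn (𝒜 : Set C) (A B : C) : Prop :=
  A ∈ 𝒜 ∧ B ∈ 𝒜 ∧ ∃ (K : C) (f : K ⟶ A) (g : A ⟶ B) (h : B ⟶ K⟦(1 : ℤ)⟧),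
    K ∈ 𝒜 ∧ ¬ IsZero K ∧ Triangle.mk f g h ∈ distTriang C

/-- A subcategory is of finite length if it is Artinian (no infinite chains of strict
subobjects) and Noetherian (no infinite chains of strict quotients). -/
def FiniteLengthIn (𝒜 : Set C) : Prop :=
  (¬ ∃ c : ℕ → C, ∀ n, StrictSubIn 𝒜 (c (n + 1)) (c n)) ∧
  (¬ ∃ c : ℕ → C, ∀ n, StrictQuotIn 𝒜 (c n) (c (n + 1)))

/-- Local finiteness of a prestability condition. -/
def LocallyFinite (σ : PreStab C) : Prop :=
  ∃ ε : ℝ, 0 < ε ∧ ∀ φ : ℝ,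
    FiniteLengthIn (setOf (extClosure (⋃ ψ ∈ Set.Ioo (φ - ε) (φ + ε), σ.P ψ)))

/-- A locally finite stability condition. -/
def IsStabilityCondition (σ : PreStab C) : Prop :=
  IsStabCond σ ∧ LocallyFinite σ

variable (C) in
/-- The set of locally finite stability conditions on `C`. -/
abbrev Stab := {σ : PreStab C // IsStabilityCondition σ}

/-- The largest phase `φ⁺(E)` appearing in a Harder–Narasimhan filtration of `E`
(well defined, by uniqueness of Harder–Narasimhan filtrations, for a stability
condition; here defined as a supremum over all HN filtrations). -/
def phiPlus (σ : PreStab C) (E : C) : ℝ :=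
  sSup {x | ∃ h : HNFiltration σ.P E, x = h.phi ⟨0, h.npos⟩}

/-- The smallest phase `φ⁻(E)` appearing in a Harder–Narasimhan filtration of `E`. -/
def phiMinus (σ : PreStab C) (E : C) : ℝ :=
  sSup {x | ∃ h : HNFiltration σ.P E, x = h.phi ⟨h.n - 1, Nat.sub_lt h.npos one_pos⟩}

/-- The mass `m_σ(E) = ∑ |Z(A_i)|` of an object. -/
def mass (σ : PreStab C) (E : C) : ℝ :=
  sSup {x | ∃ h : HNFiltration σ.P E, x = ∑ i, ‖σ.Z (h.A i)‖}

/-- Bridgeland's generalized metric on the space of stability conditions, with values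
in `[0, ∞]`. -/
def stabDist (σ τ : PreStab C) : ℝ≥0∞ :=
  ⨆ E : {E : C // ¬ IsZero E},
    ENNReal.ofReal (max |phiMinus σ E.1 - phiMinus τ E.1|
      (max |phiPlus σ E.1 - phiPlus τ E.1| |Real.log (mass σ E.1 / mass τ E.1)|))

/-- The topology induced by the generalized metric: the topology generated by
open balls. -/
instance : TopologicalSpace (Stab C) :=
  TopologicalSpace.generateFrom
    {U | ∃ (σ : Stab C) (r : ℝ≥0∞), U = {τ : Stab C | stabDist σ.1 τ.1 < r}}

end Triangulated

section Functoriality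

variable {C : Type u} [Category.{v} C] {D : Type u₂} [Category.{v₂} D]

/-- Given a functor `p : C ⥤ D` and a prestability condition `σ` on `D`, the
"pushforward" prestability condition on `C`: its central charge is `Z ∘ K(p)` and its
slicing is `P' φ = {E | p(E) ∈ P φ}`.  (When `p = p^* : D^b(X) → D^b(X_L)`, this is the
pushforward `p_* σ` of a stability condition on `X_L`; when `p = p_* : D^b(X_L) → D^b(X)`,
this is the pullback `p^* σ` of a stability condition on `X`.) -/
def pushforward (p : C ⥤ D) (σ : PreStab D) : PreStab C where
  Z E := σ.Z (p.obj E)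
  P φ := {E | p.obj E ∈ σ.P φ}

end Functoriality

section GroupAction

variable {C : Type u} [Category.{v} C] {G : Type} [Group G]

/-- The action of a group element `g` on prestability conditions:
`g • (Z, P) = (Z ∘ K(g_*), g^* P)`, where `g_* = (g⁻¹)^*` and `(g^* P)(φ)` is the
strictly full image of `P φ` under `g^*`. -/
def gAct (gst : G → C ⥤ C) (g : G) (σ : PreStab C) : PreStab C where
  Z E := σ.Z ((gst g⁻¹).obj E)
  P φ := {E | ∃ X ∈ σ.P φ, Nonempty ((gst g).obj X ≅ E)}

/-- The cocycle condition for a `G`-linearization `lam` of an object `X`. -/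
def CocycleLin (gst : G → C ⥤ C) (actMul : ∀ g h : G, gst h ⋙ gst g ≅ gst (g * h))
    (X : C) (lam : ∀ g : G, X ≅ (gst g).obj X) : Prop :=
  ∀ g h : G, (lam (g * h)).hom =
    (lam g).hom ≫ (gst g).map ((lam h).hom) ≫ (actMul g h).hom.app X

/-- Compatibility of a morphism with `G`-linearizations of its source and target. -/
def LinHomCompat (gst : G → C ⥤ C) {X Y : C}
    (lamX : ∀ g : G, X ≅ (gst g).obj X) (lamY : ∀ g : G, Y ≅ (gst g).obj Y)
    (f : X ⟶ Y) : Prop :=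
  ∀ g : G, f ≫ (lamY g).hom = (lamX g).hom ≫ (gst g).map f

/-- A function on objects which is additive on distinguished triangles; this is the
same as a group homomorphism on the Grothendieck group. -/
def AdditiveOnTriangles {C : Type u₂} [Category.{v₂} C] [Preadditive C] [HasZeroObject C]
    [HasShift C ℤ] [∀ n : ℤ, (shiftFunctor C n).Additive] [Pretriangulated C]
    (U : C → ℂ) : Prop :=
  ∀ T ∈ distTriang C, U T.obj₂ = U T.obj₁ + U T.obj₃

/-- Bridgeland's generalized norm `‖U‖_σ` on central charges, with values in `[0,∞]`:
the supremum over nonzero `σ`-semistable objects `E` of `|U(E)|/|Z(E)|`. -/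
noncomputable def stabNorm (σ : PreStab C) (U : C → ℂ) : ℝ≥0∞ :=
  ⨆ E : {E : C // ¬ IsZero E ∧ ∃ φ : ℝ, E ∈ σ.P φ},
    ENNReal.ofReal (‖U E.1‖ / ‖σ.Z E.1‖)

end GroupAction

section Descent

variable {C₁ : Type u} [Category.{v} C₁] {C₂ : Type u₂} [Category.{v₂} C₂]
  {G : Type} [Group G]

/-- The Galois descent hypothesis: the natural functor from `T` to the category of
`G`-linearized objects of `T_L`, sending `E` to `p^* E` with its canonical
linearization, is an equivalence of categories.  This is expressed by saying that it
is fully faithful (morphisms compatible with the linearizations descend uniquely) and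
essentially surjective (every `G`-linearized object is isomorphic, compatibly with the
linearizations, to some `p^* E` with its canonical linearization). -/
def GaloisDescent (pstar : C₁ ⥤ C₂) (gst : G → C₂ ⥤ C₂)
    (actMul : ∀ g h : G, gst h ⋙ gst g ≅ gst (g * h))
    (pIso : ∀ g : G, pstar ≅ pstar ⋙ gst g) : Prop :=
  (∀ (E F : C₁) (f' : pstar.obj E ⟶ pstar.obj F),
      LinHomCompat gst (fun g => (pIso g).app E) (fun g => (pIso g).app F) f' →
      ∃! f : E ⟶ F, pstar.map f = f') ∧
  (∀ (X : C₂) (lam : ∀ g : G, X ≅ (gst g).obj X), CocycleLin gst actMul X lam →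
      ∃ (E : C₁) (u : pstar.obj E ≅ X),
        LinHomCompat gst (fun g => (pIso g).app E) lam u.hom)

end Descent


section Aux
open ZeroObject
set_option linter.unusedSectionVars false



variable {C : Type u} [Category.{v} C] [Preadditive C] [HasZeroObject C] [HasShift C ℤ]
  [∀ n : ℤ, (shiftFunctor C n).Additive] [Pretriangulated C] [HasFiniteBiproducts C]

/-! ### Basic facts about central charges -/

lemma Z_iso {σ : PreStab C} (hz : ∀ T ∈ distTriang C, σ.Z T.obj₂ = σ.Z T.obj₁ + σ.Z T.obj₃)
    {X Y : C} (e : X ≅ Y) : σ.Z X = σ.Z Y := by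
  have h0 : σ.Z (0 : C) = 0 := by
    have h := hz _ (contractible_distinguished (0 : C))
    exact (left_eq_add.mp h)
  have hd : Triangle.mk e.hom (0 : Y ⟶ (0 : C)) (0 : (0 : C) ⟶ X⟦(1 : ℤ)⟧) ∈ distTriang C := by
    refine isomorphic_distinguished _ (contractible_distinguished X) _ ?_
    exact Triangle.isoMk _ _ (Iso.refl _) e.symm (Iso.refl _)
      (by exact e.hom_inv_id.trans (Category.id_comp _).symm)
      (by exact zero_comp.trans comp_zero.symm) (by exact zero_comp.trans comp_zero.symm)
  have h := hz _ hd
  change σ.Z Y = σ.Z X + σ.Z 0 at h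
  rw [h, h0, add_zero]

lemma Z_isZero {σ : PreStab C} (hz : ∀ T ∈ distTriang C, σ.Z T.obj₂ = σ.Z T.obj₁ + σ.Z T.obj₃)
    {X : C} (hX : IsZero X) : σ.Z X = 0 := by
  have h0 : σ.Z (0 : C) = 0 := by
    have h := hz _ (contractible_distinguished (0 : C))
    exact (left_eq_add.mp h)
  rw [Z_iso hz hX.isoZero, h0]

/-! ### Vanishing of morphisms along filtrations -/

lemma hom_from_fil {P : ℝ → Set C} {E : C} (h : HNFiltration P E) {W : C}
    (k : Fin (h.n + 1)) (hA : ∀ i : Fin h.n, (i : ℕ) < (k : ℕ) → ∀ f : h.A i ⟶ W, f = 0) :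
    ∀ f : h.Fil k ⟶ W, f = 0 := by
  induction k using Fin.induction with
  | zero => exact fun f => h.fil_zero.eq_of_src f 0
  | succ i ih =>
    intro f
    obtain ⟨a, b, c, hT⟩ := h.tri i
    have h1 : (Triangle.mk a b c).mor₁ ≫ f = 0 :=
      ih (fun j hj => hA j (by simp only [Fin.val_succ, Fin.coe_castSucc] at *; omega)) _
    obtain ⟨g, hg⟩ := Triangle.yoneda_exact₂ _ hT f h1
    rw [hg, hA i (by simp) g]; exact comp_zero

lemma hom_to_fil {P : ℝ → Set C} {E : C} (h : HNFiltration P E) {W : C}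
    (k : Fin (h.n + 1)) (hA : ∀ i : Fin h.n, (i : ℕ) < (k : ℕ) → ∀ f : W ⟶ h.A i, f = 0) :
    ∀ f : W ⟶ h.Fil k, f = 0 := by
  induction k using Fin.induction with
  | zero => exact fun f => h.fil_zero.eq_of_tgt f 0
  | succ i ih =>
    intro f
    obtain ⟨a, b, c, hT⟩ := h.tri i
    have h1 : f ≫ (Triangle.mk a b c).mor₂ = 0 := hA i (by simp) _
    obtain ⟨g, hg⟩ := Triangle.coyoneda_exact₂ _ hT f h1
    rw [hg, ih (fun j hj => hA j (by simp only [Fin.val_succ, Fin.coe_castSucc] at *; omega)) g]; exact zero_comp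

/-- If all maps `X ⟶ W⟦-1⟧` vanish then all maps `X⟦1⟧ ⟶ W` vanish. -/
lemma hom_from_shift_zero {X W : C} (hX : ∀ f : X ⟶ W⟦(-1 : ℤ)⟧, f = 0) :
    ∀ f : X⟦(1 : ℤ)⟧ ⟶ W, f = 0 := by
  intro f
  have hfaith : Function.Injective ((shiftFunctor C (-1 : ℤ)).map
      (X := X⟦(1 : ℤ)⟧) (Y := W)) := fun _ _ hh => (shiftFunctor C (-1 : ℤ)).map_injective hh
  apply hfaith
  rw [Functor.map_zero]
  have e : X ≅ (X⟦(1 : ℤ)⟧)⟦(-1 : ℤ)⟧ := ((shiftFunctorCompIsoId C (1 : ℤ) (-1 : ℤ)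
    (by ring)).app X).symm
  have h1 : e.hom ≫ (shiftFunctor C (-1 : ℤ)).map f = 0 := hX _
  calc (shiftFunctor C (-1 : ℤ)).map f
      = e.inv ≫ (e.hom ≫ (shiftFunctor C (-1 : ℤ)).map f) := by simp
    _ = 0 := by rw [h1, comp_zero]

/-- Membership of a negative shift in a slicing. -/
lemma shift_neg_mem {σ : PreStab C} (hsl : IsSlicing σ.P)
    (hsc2 : ∀ (φ : ℝ) (E : C), (E⟦(1 : ℤ)⟧ ∈ σ.P (φ + 1)) ↔ E ∈ σ.P φ)
    {A : C} {φ : ℝ} (hA : A ∈ σ.P φ) : A⟦(-1 : ℤ)⟧ ∈ σ.P (φ - 1) := by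
  rw [← hsc2 (φ - 1) (A⟦(-1 : ℤ)⟧)]
  have e : A ≅ (A⟦(-1 : ℤ)⟧)⟦(1 : ℤ)⟧ :=
    ((shiftFunctorCompIsoId C (-1 : ℤ) (1 : ℤ) (by ring)).app A).symm
  have : (φ - 1) + 1 = φ := by ring
  rw [this]
  exact hsl.iso_mem φ _ _ ⟨e⟩ hA

/-! ### Structure maps of a HN filtration -/

namespace HNFiltration

variable {P : ℝ → Set C} {E : C} (h : HNFiltration P E)

/-- The first map in the `i`-th triangle of a HN filtration. -/
def fmap (i : Fin h.n) : h.Fil i.castSucc ⟶ h.Fil i.succ := (h.tri i).choose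

/-- The second map in the `i`-th triangle of a HN filtration. -/
def gmap (i : Fin h.n) : h.Fil i.succ ⟶ h.A i := (h.tri i).choose_spec.choose

/-- The third map in the `i`-th triangle of a HN filtration. -/
def wmap (i : Fin h.n) : h.A i ⟶ (h.Fil i.castSucc)⟦(1 : ℤ)⟧ :=
  (h.tri i).choose_spec.choose_spec.choose

lemma tri' (i : Fin h.n) : Triangle.mk (h.fmap i) (h.gmap i) (h.wmap i) ∈ distTriang C :=
  (h.tri i).choose_spec.choose_spec.choose_spec

/-- Composite of the filtration maps up to the top. -/
def toTop : ∀ k : Fin (h.n + 1), (h.Fil k ⟶ h.Fil (Fin.last h.n)) :=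
  Fin.reverseInduction (𝟙 _) (fun i ih => h.fmap i ≫ ih)

@[simp] lemma toTop_last : h.toTop (Fin.last h.n) = 𝟙 _ :=
  Fin.reverseInduction_last

lemma toTop_castSucc (i : Fin h.n) : h.toTop i.castSucc = h.fmap i ≫ h.toTop i.succ :=
  Fin.reverseInduction_castSucc ..

lemma toTop_cancel {W : C} (hW : ∀ i : Fin h.n, ∀ f : W ⟶ (h.A i)⟦(-1 : ℤ)⟧, f = 0) :
    ∀ (k : Fin (h.n + 1)) (v : W ⟶ h.Fil k), v ≫ h.toTop k = 0 → v = 0 := by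
  intro k
  induction k using Fin.reverseInduction with
  | last => intro v hv; simpa using hv
  | cast i ih =>
    intro v hv
    rw [toTop_castSucc, ← Category.assoc] at hv
    have h2 : v ≫ h.fmap i = 0 := ih _ hv
    obtain ⟨g, hg⟩ := Triangle.coyoneda_exact₂ _ (inv_rot_of_distTriang _ (h.tri' i)) v
      (by exact h2)
    rw [hg, hW i g]; exact zero_comp

end HNFiltration

end Aux

section Aux2
open ZeroObject
set_option linter.unusedSectionVars false

variable {C : Type u} [Category.{v} C] [Preadditive C] [HasZeroObject C] [HasShift C ℤ]
  [∀ n : ℤ, (shiftFunctor C n).Additive] [Pretriangulated C] [HasFiniteBiproducts C]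
  {σ : PreStab C}

namespace HNFiltration

variable {P : ℝ → Set C} {E : C}

/-- The index of the last (smallest phase) semistable factor. -/
def lastIdx (h : HNFiltration P E) : Fin h.n := ⟨h.n - 1, Nat.sub_lt h.npos one_pos⟩

lemma succ_lastIdx (h : HNFiltration P E) : h.lastIdx.succ = Fin.last h.n := by
  ext
  have := h.npos
  simp [lastIdx, Fin.last]
  omega

/-- The index of the first (largest phase) semistable factor. -/
def zeroIdx (h : HNFiltration P E) : Fin h.n := ⟨0, h.npos⟩

lemma castSucc_zeroIdx (h : HNFiltration P E) : h.zeroIdx.castSucc = 0 := by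
  ext; simp [zeroIdx]

lemma isIso_gmap_zeroIdx (h : HNFiltration P E) : IsIso (h.gmap h.zeroIdx) := by
  have h0 : IsZero ((Triangle.mk (h.fmap h.zeroIdx) (h.gmap h.zeroIdx)
      (h.wmap h.zeroIdx)).obj₁) := by
    change IsZero (h.Fil h.zeroIdx.castSucc)
    rw [h.castSucc_zeroIdx]
    exact h.fil_zero
  exact (Triangle.isZero₁_iff_isIso₂ _ (h.tri' h.zeroIdx)).mp h0

/-- The first step of the filtration is isomorphic to the first factor. -/
noncomputable def filOneIso (h : HNFiltration P E) : h.Fil h.zeroIdx.succ ≅ h.A h.zeroIdx :=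
  letI := h.isIso_gmap_zeroIdx
  asIso (h.gmap h.zeroIdx)

end HNFiltration

lemma hom_shift_filcast_to_A (hs : IsStabCond σ) {E : C} (h : HNFiltration σ.P E) :
    ∀ v : (h.Fil h.lastIdx.castSucc)⟦(1 : ℤ)⟧ ⟶ h.A h.lastIdx, v = 0 := by
  apply hom_from_shift_zero
  apply hom_from_fil h h.lastIdx.castSucc
  intro j hj f
  have hmem : (h.A h.lastIdx)⟦(-1 : ℤ)⟧ ∈ σ.P (h.phi h.lastIdx - 1) :=
    shift_neg_mem hs.slicing hs.sc2 (h.A_mem _)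
  refine hs.sc3 _ _ ?_ _ (h.A_mem j) _ hmem f
  have hle : j ≤ h.lastIdx := by
    simp only [Fin.le_def, HNFiltration.lastIdx]
    simp only [Fin.coe_castSucc, HNFiltration.lastIdx] at hj
    omega
  have := h.phi_anti.antitone hle
  linarith

lemma gmap_lastIdx_ne_zero (hs : IsStabCond σ) {E : C} (h : HNFiltration σ.P E) :
    h.gmap h.lastIdx ≠ 0 := by
  intro hzero
  obtain ⟨u, hu⟩ := Triangle.yoneda_exact₂ _ (rot_of_distTriang _ (h.tri' h.lastIdx))
    (𝟙 (h.A h.lastIdx)) (by exact (Category.comp_id _).trans hzero)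
  rw [hom_shift_filcast_to_A hs h u] at hu
  replace hu : 𝟙 (h.A h.lastIdx) = 0 := hu.trans comp_zero
  exact h.A_ne h.lastIdx (IsZero.of_iso (isZero_zero C) (by
    exact { hom := 0, inv := 0, hom_inv_id := by rw [hu]; simp, inv_hom_id := by simp }))

lemma no_hn_of_isZero (hs : IsStabCond σ) {X : C} (h : HNFiltration σ.P X)
    (hX : IsZero X) : False := by
  have h1 : IsZero (h.Fil (Fin.last h.n)) := hX.of_iso h.fil_last.some
  have h2 : IsZero (h.Fil h.lastIdx.succ) := by rw [h.succ_lastIdx]; exact h1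
  exact gmap_lastIdx_ne_zero hs h (h2.eq_of_src _ _)

lemma fil_one_mem (hs : IsStabCond σ) {E : C} (h : HNFiltration σ.P E) :
    h.Fil h.zeroIdx.succ ∈ σ.P (h.phi h.zeroIdx) :=
  hs.slicing.iso_mem _ _ _ ⟨h.filOneIso.symm⟩ (h.A_mem _)

lemma top_phase_le (hs : IsStabCond σ) {E : C} (h h' : HNFiltration σ.P E) :
    h.phi h.zeroIdx ≤ h'.phi h'.zeroIdx := by
  by_contra hgt
  push_neg at hgt
  have hB : h.Fil h.zeroIdx.succ ∈ σ.P (h.phi h.zeroIdx) := fil_one_mem hs h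
  have hv : ∀ v : h.Fil h.zeroIdx.succ ⟶ h'.Fil (Fin.last h'.n), v = 0 := by
    apply hom_to_fil h' (Fin.last h'.n)
    intro j _ f
    refine hs.sc3 _ _ ?_ _ hB _ (h'.A_mem j) f
    have hle : h'.zeroIdx ≤ j := by simp [Fin.le_def, HNFiltration.zeroIdx]
    exact lt_of_le_of_lt (h'.phi_anti.antitone hle) hgt
  have c : h.Fil (Fin.last h.n) ≅ h'.Fil (Fin.last h'.n) :=
    h.fil_last.some.trans h'.fil_last.some.symm
  have htop : h.toTop h.zeroIdx.succ = 0 := by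
    have hz := hv (h.toTop h.zeroIdx.succ ≫ c.hom)
    calc h.toTop h.zeroIdx.succ = (h.toTop h.zeroIdx.succ ≫ c.hom) ≫ c.inv := by simp
      _ = 0 := by rw [hz, zero_comp]
  have hone : 𝟙 (h.Fil h.zeroIdx.succ) = 0 := by
    refine h.toTop_cancel ?_ h.zeroIdx.succ (𝟙 _) (by rw [Category.id_comp, htop])
    intro i f
    refine hs.sc3 _ _ ?_ _ hB _ (shift_neg_mem hs.slicing hs.sc2 (h.A_mem i)) f
    have hle : h.zeroIdx ≤ i := by simp [Fin.le_def, HNFiltration.zeroIdx]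
    have := h.phi_anti.antitone hle
    linarith
  have hAz : IsZero (h.A h.zeroIdx) := by
    have hBz : IsZero (h.Fil h.zeroIdx.succ) := by
      rw [IsZero.iff_id_eq_zero]; exact hone
    exact hBz.of_iso h.filOneIso.symm
  exact h.A_ne _ hAz

lemma top_phase_eq (hs : IsStabCond σ) {E : C} (h h' : HNFiltration σ.P E) :
    h.phi h.zeroIdx = h'.phi h'.zeroIdx :=
  le_antisymm (top_phase_le hs h h') (top_phase_le hs h' h)

lemma bot_phase_le (hs : IsStabCond σ) {E : C} (h h' : HNFiltration σ.P E) :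
    h.phi h.lastIdx ≤ h'.phi h'.lastIdx := by
  by_contra hgt
  push_neg at hgt
  -- hgt : h'.phi h'.lastIdx < h.phi h.lastIdx
  have hv : ∀ v : h.Fil (Fin.last h.n) ⟶ h'.A h'.lastIdx, v = 0 := by
    apply hom_from_fil h (Fin.last h.n)
    intro j _ f
    refine hs.sc3 _ _ ?_ _ (h.A_mem j) _ (h'.A_mem _) f
    have hle : j ≤ h.lastIdx := by
      simp only [Fin.le_def, HNFiltration.lastIdx]
      omega
    exact lt_of_lt_of_le hgt (h.phi_anti.antitone hle)
  apply gmap_lastIdx_ne_zero hs h'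
  have heq : h'.Fil h'.lastIdx.succ = h'.Fil (Fin.last h'.n) := congrArg h'.Fil h'.succ_lastIdx
  have c : h'.Fil (Fin.last h'.n) ≅ h.Fil (Fin.last h.n) :=
    h'.fil_last.some.trans h.fil_last.some.symm
  have hz := hv (c.inv ≫ eqToHom heq.symm ≫ h'.gmap h'.lastIdx)
  calc h'.gmap h'.lastIdx
      = eqToHom heq ≫ c.hom ≫ (c.inv ≫ eqToHom heq.symm ≫ h'.gmap h'.lastIdx) := by simp
    _ = 0 := by rw [hz]; simp

lemma bot_phase_eq (hs : IsStabCond σ) {E : C} (h h' : HNFiltration σ.P E) :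
    h.phi h.lastIdx = h'.phi h'.lastIdx :=
  le_antisymm (bot_phase_le hs h h') (bot_phase_le hs h' h)

end Aux2

section Aux3
open ZeroObject
set_option linter.unusedSectionVars false
set_option maxHeartbeats 1000000

variable {C : Type u} [Category.{v} C] [Preadditive C] [HasZeroObject C] [HasShift C ℤ]
  [∀ n : ℤ, (shiftFunctor C n).Additive] [Pretriangulated C] [HasFiniteBiproducts C]
  {σ : PreStab C}

namespace HNFiltration

variable {P : ℝ → Set C}

/-- Transport a HN filtration along an isomorphism of the filtered object. -/
def ofIso {E E' : C} (h : HNFiltration P E) (e : E ≅ E') : HNFiltration P E' where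
  n := h.n
  npos := h.npos
  Fil := h.Fil
  A := h.A
  phi := h.phi
  fil_zero := h.fil_zero
  fil_last := ⟨h.fil_last.some.trans e⟩
  A_mem := h.A_mem
  A_ne := h.A_ne
  phi_anti := h.phi_anti
  tri := h.tri

/-- Truncation of a HN filtration, which is a HN filtration of the next-to-last step. -/
def trunc {E : C} (h : HNFiltration P E) (hn : 2 ≤ h.n) :
    HNFiltration P (h.Fil h.lastIdx.castSucc) where
  n := h.n - 1
  npos := by omega
  Fil i := h.Fil ⟨i.1, by omega⟩
  A i := h.A ⟨i.1, by omega⟩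
  phi i := h.phi ⟨i.1, by omega⟩
  fil_zero := by
    convert h.fil_zero using 2
    ext; simp
  fil_last := ⟨eqToIso (congrArg h.Fil (by ext; simp [HNFiltration.lastIdx, Fin.last]))⟩
  A_mem i := h.A_mem _
  A_ne i := h.A_ne _
  phi_anti := by
    intro a b hab
    exact h.phi_anti (Fin.mk_lt_mk.mpr hab)
  tri i := h.tri ⟨i.1, by omega⟩

@[simp] lemma trunc_n {E : C} (h : HNFiltration P E) (hn : 2 ≤ h.n) :
    (h.trunc hn).n = h.n - 1 := rfl

end HNFiltration

lemma sum_split {n : ℕ} (hn : 0 < n) (F : Fin n → ℝ) :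
    ∑ i, F i = (∑ i : Fin (n - 1), F ⟨i.1, by omega⟩) + F ⟨n - 1, by omega⟩ := by
  obtain ⟨k, rfl⟩ : ∃ k, n = k + 1 := ⟨n - 1, by omega⟩
  rw [Fin.sum_univ_castSucc]
  rfl

theorem mass_unique (hs : IsStabCond σ) :
    ∀ (N : ℕ) {E : C} (h h' : HNFiltration σ.P E), h.n = N →
      ∑ i, ‖σ.Z (h.A i)‖ = ∑ i, ‖σ.Z (h'.A i)‖ := by
  intro N
  induction N with
  | zero => intro E h h' hN; exact absurd hN (by have := h.npos; omega)
  | succ N ih =>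
    intro E h h' hN
    have hψ : h.phi h.lastIdx = h'.phi h'.lastIdx := bot_phase_eq hs h h'
    have eS : h.Fil h.lastIdx.succ = h.Fil (Fin.last h.n) := congrArg h.Fil h.succ_lastIdx
    have eS' : h'.Fil h'.lastIdx.succ = h'.Fil (Fin.last h'.n) := congrArg h'.Fil h'.succ_lastIdx
    let eE : h.Fil h.lastIdx.succ ≅ E := eqToIso eS ≪≫ h.fil_last.some
    let eE' : h'.Fil h'.lastIdx.succ ≅ E := eqToIso eS' ≪≫ h'.fil_last.some
    let u : h'.Fil h'.lastIdx.succ ≅ h.Fil h.lastIdx.succ := eE' ≪≫ eE.symm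
    -- the two factorizations
    have claim0 : h'.fmap h'.lastIdx ≫ (u.hom ≫ h.gmap h.lastIdx) = 0 := by
      refine hom_from_fil h' h'.lastIdx.castSucc ?_ _
      intro j hj f
      refine hs.sc3 _ _ ?_ _ (h'.A_mem j) _ (h.A_mem _) f
      rw [hψ]
      refine h'.phi_anti ?_
      simpa [Fin.lt_def, HNFiltration.lastIdx] using hj
    obtain ⟨r, hr0⟩ : ∃ r : h'.A h'.lastIdx ⟶ h.A h.lastIdx,
        u.hom ≫ h.gmap h.lastIdx = h'.gmap h'.lastIdx ≫ r := Triangle.yoneda_exact₂ _ (h'.tri' h'.lastIdx)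
      (u.hom ≫ h.gmap h.lastIdx) claim0
    have hr : u.hom ≫ h.gmap h.lastIdx = h'.gmap h'.lastIdx ≫ r := hr0
    have claim0' : h.fmap h.lastIdx ≫ (u.inv ≫ h'.gmap h'.lastIdx) = 0 := by
      refine hom_from_fil h h.lastIdx.castSucc ?_ _
      intro j hj f
      refine hs.sc3 _ _ ?_ _ (h.A_mem j) _ (h'.A_mem _) f
      rw [← hψ]
      refine h.phi_anti ?_
      simpa [Fin.lt_def, HNFiltration.lastIdx] using hj
    obtain ⟨r', hr0'⟩ : ∃ r' : h.A h.lastIdx ⟶ h'.A h'.lastIdx,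
        u.inv ≫ h'.gmap h'.lastIdx = h.gmap h.lastIdx ≫ r' := Triangle.yoneda_exact₂ _ (h.tri' h.lastIdx)
      (u.inv ≫ h'.gmap h'.lastIdx) claim0'
    have hr' : u.inv ≫ h'.gmap h'.lastIdx = h.gmap h.lastIdx ≫ r' := hr0'
    -- cancellation property of gmap
    have hcanc : ∀ {F : C} {E₀ : C} (h₀ : HNFiltration σ.P E₀),
        (∀ v : (h₀.Fil h₀.lastIdx.castSucc)⟦(1 : ℤ)⟧ ⟶ F, v = 0) →
        ∀ w : h₀.A h₀.lastIdx ⟶ F, h₀.gmap h₀.lastIdx ≫ w = 0 → w = 0 := by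
      intro F E₀ h₀ hW w hw
      obtain ⟨g2, hg2⟩ := Triangle.yoneda_exact₂ _ (rot_of_distTriang _ (h₀.tri' h₀.lastIdx)) w
        (by exact hw)
      rw [hg2, hW g2]; exact comp_zero
    have e1 : h.gmap h.lastIdx ≫ r' ≫ r = h.gmap h.lastIdx := by
      rw [← Category.assoc, ← hr', Category.assoc, ← hr, ← Category.assoc,
        Iso.inv_hom_id, Category.id_comp]
    have e1' : h'.gmap h'.lastIdx ≫ r ≫ r' = h'.gmap h'.lastIdx := by
      rw [← Category.assoc, ← hr, Category.assoc, ← hr', ← Category.assoc,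
        Iso.hom_inv_id, Category.id_comp]
    have hrr : r' ≫ r = 𝟙 _ := by
      have hc : h.gmap h.lastIdx ≫ (r' ≫ r - 𝟙 _) = 0 := by
        rw [Preadditive.comp_sub, e1]; simp
      have := hcanc h (hom_shift_filcast_to_A hs h) _ hc
      rwa [sub_eq_zero] at this
    have hrr' : r ≫ r' = 𝟙 _ := by
      have hc : h'.gmap h'.lastIdx ≫ (r ≫ r' - 𝟙 _) = 0 := by
        rw [Preadditive.comp_sub, e1']; simp
      have := hcanc h' (hom_shift_filcast_to_A hs h') _ hc
      rwa [sub_eq_zero] at this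
    have hZbot : ‖σ.Z (h.A h.lastIdx)‖ = ‖σ.Z (h'.A h'.lastIdx)‖ := by
      rw [Z_iso hs.zadd (show h.A h.lastIdx ≅ h'.A h'.lastIdx from ⟨r', r, hrr, hrr'⟩)]
    -- construct the isomorphism between the next-to-last steps
    have comm : (Triangle.mk (h'.fmap h'.lastIdx) (h'.gmap h'.lastIdx)
          (h'.wmap h'.lastIdx)).rotate.mor₁ ≫ r =
        u.hom ≫ (Triangle.mk (h.fmap h.lastIdx) (h.gmap h.lastIdx)
          (h.wmap h.lastIdx)).rotate.mor₁ := by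
      change h'.gmap h'.lastIdx ≫ r = u.hom ≫ h.gmap h.lastIdx
      rw [← hr]
    obtain ⟨cc, hcc1, hcc2⟩ := complete_distinguished_triangle_morphism _ _
      (rot_of_distTriang _ (h'.tri' h'.lastIdx)) (rot_of_distTriang _ (h.tri' h.lastIdx))
      u.hom r comm
    let φm : (Triangle.mk (h'.fmap h'.lastIdx) (h'.gmap h'.lastIdx)
        (h'.wmap h'.lastIdx)).rotate ⟶ (Triangle.mk (h.fmap h.lastIdx) (h.gmap h.lastIdx)
        (h.wmap h.lastIdx)).rotate :=
      { hom₁ := u.hom, hom₂ := r, hom₃ := cc, comm₁ := comm, comm₂ := hcc1, comm₃ := hcc2 }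
    have hiso3 : IsIso cc := by
      have := Pretriangulated.isIso₃_of_isIso₁₂ φm
        (rot_of_distTriang _ (h'.tri' h'.lastIdx)) (rot_of_distTriang _ (h.tri' h.lastIdx))
        (by exact u.isIso_hom) (by dsimp [φm]; exact ⟨r', hrr', hrr⟩)
      exact this
    let wiso : h'.Fil h'.lastIdx.castSucc ≅ h.Fil h.lastIdx.castSucc :=
      ((shiftFunctorCompIsoId C (1 : ℤ) (-1 : ℤ) (by ring)).app _).symm ≪≫
        (shiftFunctor C (-1 : ℤ)).mapIso (@asIso _ _ _ _ cc hiso3) ≪≫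
        (shiftFunctorCompIsoId C (1 : ℤ) (-1 : ℤ) (by ring)).app _
    rcases Nat.eq_zero_or_pos N with hN0 | hNpos
    · -- length one on both sides
      have hn1 : h.n = 1 := by omega
      have hz : IsZero (h.Fil h.lastIdx.castSucc) := by
        have hidx : h.lastIdx.castSucc = 0 := by
          ext; simp [HNFiltration.lastIdx, hn1]
        rw [hidx]; exact h.fil_zero
      have hz' : IsZero (h'.Fil h'.lastIdx.castSucc) := hz.of_iso wiso
      have hm : h'.n = 1 := by
        by_contra hm
        have hm2 : 2 ≤ h'.n := by have := h'.npos; omega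
        exact no_hn_of_isZero hs (h'.trunc hm2) hz'
      rw [sum_split h.npos, sum_split h'.npos]
      haveI h1e : IsEmpty (Fin (h.n - 1)) := ⟨fun i => by have := i.2; omega⟩
      haveI h2e : IsEmpty (Fin (h'.n - 1)) := ⟨fun i => by have := i.2; omega⟩
      rw [Finset.univ_eq_empty (α := Fin (h.n - 1)), Finset.univ_eq_empty (α := Fin (h'.n - 1)),
        Finset.sum_empty, Finset.sum_empty]
      simp only [zero_add]; exact hZbot
    · -- inductive step
      have h2 : 2 ≤ h.n := by omega
      have hzne : ¬ IsZero (h.Fil h.lastIdx.castSucc) :=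
        fun hz => no_hn_of_isZero hs (h.trunc h2) hz
      have hm2 : 2 ≤ h'.n := by
        by_contra hm
        have hm1 : h'.n = 1 := by have := h'.npos; omega
        have hz' : IsZero (h'.Fil h'.lastIdx.castSucc) := by
          have hidx : h'.lastIdx.castSucc = 0 := by
            ext; simp [HNFiltration.lastIdx, hm1]
          rw [hidx]; exact h'.fil_zero
        exact hzne (hz'.of_iso wiso.symm)
      have key := ih (h.trunc h2) ((h'.trunc hm2).ofIso wiso) (by simp; omega)
      rw [sum_split h.npos, sum_split h'.npos]
      exact congrArg₂ (· + ·) key hZbot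

end Aux3

section Aux4
open ZeroObject
set_option linter.unusedSectionVars false
set_option maxHeartbeats 1000000

variable {C : Type u} [Category.{v} C] [Preadditive C] [HasZeroObject C] [HasShift C ℤ]
  [∀ n : ℤ, (shiftFunctor C n).Additive] [Pretriangulated C] [HasFiniteBiproducts C]
  {σ : PreStab C}

lemma phiPlus_eval (hs : IsStabCond σ) {E : C} (h : HNFiltration σ.P E) :
    phiPlus σ E = h.phi h.zeroIdx := by
  have hset : {x | ∃ h' : HNFiltration σ.P E, x = h'.phi ⟨0, h'.npos⟩} = {h.phi h.zeroIdx} := by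
    ext x
    simp only [Set.mem_setOf_eq, Set.mem_singleton_iff]
    constructor
    · rintro ⟨h', rfl⟩; exact top_phase_eq hs h' h
    · rintro rfl; exact ⟨h, rfl⟩
  rw [phiPlus, hset, csSup_singleton]

lemma phiMinus_eval (hs : IsStabCond σ) {E : C} (h : HNFiltration σ.P E) :
    phiMinus σ E = h.phi h.lastIdx := by
  have hset : {x | ∃ h' : HNFiltration σ.P E,
      x = h'.phi ⟨h'.n - 1, Nat.sub_lt h'.npos one_pos⟩} = {h.phi h.lastIdx} := by
    ext x
    simp only [Set.mem_setOf_eq, Set.mem_singleton_iff]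
    constructor
    · rintro ⟨h', rfl⟩; exact bot_phase_eq hs h' h
    · rintro rfl; exact ⟨h, rfl⟩
  rw [phiMinus, hset, csSup_singleton]

lemma mass_eval (hs : IsStabCond σ) {E : C} (h : HNFiltration σ.P E) :
    mass σ E = ∑ i, ‖σ.Z (h.A i)‖ := by
  have hset : {x | ∃ h' : HNFiltration σ.P E, x = ∑ i, ‖σ.Z (h'.A i)‖} =
      {∑ i, ‖σ.Z (h.A i)‖} := by
    ext x
    simp only [Set.mem_setOf_eq, Set.mem_singleton_iff]
    constructor
    · rintro ⟨h', rfl⟩; exact mass_unique hs h'.n h' h rfl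
    · rintro rfl; exact ⟨h, rfl⟩
  rw [mass, hset, csSup_singleton]

lemma mass_pos (hs : IsStabCond σ) {E : C} (hE : ¬ IsZero E) : 0 < mass σ E := by
  obtain ⟨h⟩ := hs.sc4 E hE
  rw [mass_eval hs h]
  haveI : Nonempty (Fin h.n) := ⟨h.zeroIdx⟩
  refine Finset.sum_pos (fun i _ => ?_) Finset.univ_nonempty
  obtain ⟨m, hm, hz⟩ := hs.sc1 _ _ (h.A_mem i) (h.A_ne i)
  refine norm_pos_iff.mpr ?_
  rw [hz]
  exact mul_ne_zero (by exact_mod_cast hm.ne') (Complex.exp_ne_zero _)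

lemma stabDist_self (ρ : PreStab C) : stabDist ρ ρ = 0 := by
  refine le_antisymm (iSup_le ?_) zero_le
  rintro ⟨E, hE⟩
  have hlog : |Real.log (mass ρ E / mass ρ E)| = 0 := by
    rcases eq_or_ne (mass ρ E) 0 with hm | hm
    · simp [hm]
    · simp [div_self hm]
  simp [hlog]

lemma abslog_triangle {a b c : ℝ} (hb : b ≠ 0) :
    |Real.log (a / c)| ≤ |Real.log (a / b)| + |Real.log (b / c)| := by
  rcases eq_or_ne a 0 with ha | ha
  · have h0 : Real.log (a / c) = 0 := by simp [ha]
    rw [h0, abs_zero]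
    positivity
  rcases eq_or_ne c 0 with hc | hc
  · have h0 : Real.log (a / c) = 0 := by simp [hc]
    rw [h0, abs_zero]
    positivity
  have heq : a / c = (a / b) * (b / c) := by field_simp
  rw [heq, Real.log_mul (div_ne_zero ha hb) (div_ne_zero hb hc)]
  exact abs_add_le _ _

lemma stabDist_triangle (ρ₁ ρ₂ ρ₃ : PreStab C) (hm : ∀ E : C, ¬ IsZero E → mass ρ₂ E ≠ 0) :
    stabDist ρ₁ ρ₃ ≤ stabDist ρ₁ ρ₂ + stabDist ρ₂ ρ₃ := by
  refine iSup_le ?_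
  rintro ⟨E, hE⟩
  have h1 : |phiMinus ρ₁ E - phiMinus ρ₃ E| ≤
      (max |phiMinus ρ₁ E - phiMinus ρ₂ E| (max |phiPlus ρ₁ E - phiPlus ρ₂ E|
        |Real.log (mass ρ₁ E / mass ρ₂ E)|)) +
      (max |phiMinus ρ₂ E - phiMinus ρ₃ E| (max |phiPlus ρ₂ E - phiPlus ρ₃ E|
        |Real.log (mass ρ₂ E / mass ρ₃ E)|)) :=
    le_trans (abs_sub_le _ _ _) (add_le_add (le_max_left _ _) (le_max_left _ _))
  have h2 : |phiPlus ρ₁ E - phiPlus ρ₃ E| ≤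
      (max |phiMinus ρ₁ E - phiMinus ρ₂ E| (max |phiPlus ρ₁ E - phiPlus ρ₂ E|
        |Real.log (mass ρ₁ E / mass ρ₂ E)|)) +
      (max |phiMinus ρ₂ E - phiMinus ρ₃ E| (max |phiPlus ρ₂ E - phiPlus ρ₃ E|
        |Real.log (mass ρ₂ E / mass ρ₃ E)|)) :=
    le_trans (abs_sub_le _ _ _) (add_le_add
      (le_trans (le_max_left _ _) (le_max_right _ _))
      (le_trans (le_max_left _ _) (le_max_right _ _)))
  have h3 : |Real.log (mass ρ₁ E / mass ρ₃ E)| ≤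
      (max |phiMinus ρ₁ E - phiMinus ρ₂ E| (max |phiPlus ρ₁ E - phiPlus ρ₂ E|
        |Real.log (mass ρ₁ E / mass ρ₂ E)|)) +
      (max |phiMinus ρ₂ E - phiMinus ρ₃ E| (max |phiPlus ρ₂ E - phiPlus ρ₃ E|
        |Real.log (mass ρ₂ E / mass ρ₃ E)|)) :=
    le_trans (abslog_triangle (hm E hE)) (add_le_add
      (le_trans (le_max_right _ _) (le_max_right _ _))
      (le_trans (le_max_right _ _) (le_max_right _ _)))
  calc ENNReal.ofReal (max |phiMinus ρ₁ E - phiMinus ρ₃ E| (max |phiPlus ρ₁ E - phiPlus ρ₃ E|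
        |Real.log (mass ρ₁ E / mass ρ₃ E)|))
      ≤ ENNReal.ofReal ((max |phiMinus ρ₁ E - phiMinus ρ₂ E| (max |phiPlus ρ₁ E - phiPlus ρ₂ E|
          |Real.log (mass ρ₁ E / mass ρ₂ E)|)) +
        (max |phiMinus ρ₂ E - phiMinus ρ₃ E| (max |phiPlus ρ₂ E - phiPlus ρ₃ E|
          |Real.log (mass ρ₂ E / mass ρ₃ E)|))) :=
      ENNReal.ofReal_le_ofReal (max_le h1 (max_le h2 h3))
    _ ≤ ENNReal.ofReal (max |phiMinus ρ₁ E - phiMinus ρ₂ E| (max |phiPlus ρ₁ E - phiPlus ρ₂ E|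
          |Real.log (mass ρ₁ E / mass ρ₂ E)|)) +
        ENNReal.ofReal (max |phiMinus ρ₂ E - phiMinus ρ₃ E| (max |phiPlus ρ₂ E - phiPlus ρ₃ E|
          |Real.log (mass ρ₂ E / mass ρ₃ E)|)) := ENNReal.ofReal_add_le
    _ ≤ stabDist ρ₁ ρ₂ + stabDist ρ₂ ρ₃ :=
      add_le_add (le_iSup (fun F : {F : C // ¬ IsZero F} =>
          ENNReal.ofReal (max |phiMinus ρ₁ F.1 - phiMinus ρ₂ F.1|
            (max |phiPlus ρ₁ F.1 - phiPlus ρ₂ F.1|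
              |Real.log (mass ρ₁ F.1 / mass ρ₂ F.1)|))) ⟨E, hE⟩)
        (le_iSup (fun F : {F : C // ¬ IsZero F} =>
          ENNReal.ofReal (max |phiMinus ρ₂ F.1 - phiMinus ρ₃ F.1|
            (max |phiPlus ρ₂ F.1 - phiPlus ρ₃ F.1|
              |Real.log (mass ρ₂ F.1 / mass ρ₃ F.1)|))) ⟨E, hE⟩)

lemma mass_ne_zero {ρ : PreStab C} (hρ : IsStabilityCondition ρ) {E : C} (hE : ¬ IsZero E) :
    mass ρ E ≠ 0 :=
  (mass_pos hρ.1 hE).ne'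

end Aux4

section Aux5
open ZeroObject
set_option linter.unusedSectionVars false
set_option maxHeartbeats 1000000

variable {C : Type u} [Category.{v} C] [Preadditive C] [HasZeroObject C] [HasShift C ℤ]
  [∀ n : ℤ, (shiftFunctor C n).Additive] [Pretriangulated C] [HasFiniteBiproducts C]
  {D : Type u₂} [Category.{v₂} D] [Preadditive D] [HasZeroObject D] [HasShift D ℤ]
  [∀ n : ℤ, (shiftFunctor D n).Additive] [Pretriangulated D] [HasFiniteBiproducts D]

/-- Push forward a HN filtration for the pushforward prestability condition to a HN
filtration downstairs. -/
def pushHN (p : C ⥤ D) [p.CommShift ℤ] [p.IsTriangulated] {σ : PreStab D}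
    (hσ : IsStabCond σ) (hσp : IsStabCond (pushforward p σ)) {E : C}
    (h : HNFiltration (pushforward p σ).P E) : HNFiltration σ.P (p.obj E) where
  n := h.n
  npos := h.npos
  Fil k := p.obj (h.Fil k)
  A i := p.obj (h.A i)
  phi := h.phi
  fil_zero := p.map_isZero h.fil_zero
  fil_last := ⟨p.mapIso h.fil_last.some⟩
  A_mem i := h.A_mem i
  A_ne i := fun hz => by
    obtain ⟨m, hm, hzeq⟩ := hσp.sc1 _ _ (h.A_mem i) (h.A_ne i)
    have hzeq' : σ.Z (p.obj (h.A i)) = (m : ℂ) * Complex.exp ((Real.pi : ℂ) *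
      (h.phi i) * Complex.I) := hzeq
    have h0 : σ.Z (p.obj (h.A i)) = 0 := Z_isZero hσ.zadd hz
    exact (mul_ne_zero (by exact_mod_cast hm.ne') (Complex.exp_ne_zero _)) (h0 ▸ hzeq'.symm)
  phi_anti := h.phi_anti
  tri i := by
    obtain ⟨f, g, w, hT⟩ := h.tri i
    exact ⟨p.map f, p.map g, p.map w ≫ (p.commShiftIso (1 : ℤ)).hom.app _,
      p.map_distinguished _ hT⟩

lemma pushforward_dist_le (p : C ⥤ D) [p.CommShift ℤ] [p.IsTriangulated] (σ τ : Stab D)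
    (hσp : IsStabilityCondition (pushforward p σ.1))
    (hτp : IsStabilityCondition (pushforward p τ.1)) :
    stabDist (pushforward p σ.1) (pushforward p τ.1) ≤ stabDist σ.1 τ.1 := by
  refine iSup_le ?_
  rintro ⟨E, hE⟩
  obtain ⟨hσc, -⟩ := hσp
  obtain ⟨hτc, -⟩ := hτp
  have hσs := σ.2.1
  have hτs := τ.2.1
  obtain ⟨hf⟩ := hσc.sc4 E hE
  obtain ⟨hg⟩ := hτc.sc4 E hE
  let hfD := pushHN p hσs hσc hf
  let hgD := pushHN p hτs hτc hg
  have hne : ¬ IsZero (p.obj E) := fun hz => no_hn_of_isZero hσs hfD hz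
  have e1 : phiPlus (pushforward p σ.1) E = phiPlus σ.1 (p.obj E) :=
    (phiPlus_eval hσc hf).trans (phiPlus_eval hσs hfD).symm
  have e2 : phiMinus (pushforward p σ.1) E = phiMinus σ.1 (p.obj E) :=
    (phiMinus_eval hσc hf).trans (phiMinus_eval hσs hfD).symm
  have e3 : mass (pushforward p σ.1) E = mass σ.1 (p.obj E) :=
    (mass_eval hσc hf).trans (mass_eval hσs hfD).symm
  have e4 : phiPlus (pushforward p τ.1) E = phiPlus τ.1 (p.obj E) :=
    (phiPlus_eval hτc hg).trans (phiPlus_eval hτs hgD).symm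
  have e5 : phiMinus (pushforward p τ.1) E = phiMinus τ.1 (p.obj E) :=
    (phiMinus_eval hτc hg).trans (phiMinus_eval hτs hgD).symm
  have e6 : mass (pushforward p τ.1) E = mass τ.1 (p.obj E) :=
    (mass_eval hτc hg).trans (mass_eval hτs hgD).symm
  rw [e1, e2, e3, e4, e5, e6]
  exact le_iSup (fun F : {F : D // ¬ IsZero F} =>
    ENNReal.ofReal (max |phiMinus σ.1 F.1 - phiMinus τ.1 F.1|
      (max |phiPlus σ.1 F.1 - phiPlus τ.1 F.1|
        |Real.log (mass σ.1 F.1 / mass τ.1 F.1)|))) ⟨p.obj E, hne⟩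

end Aux5


/-- Let `p^* : T → T_L` be an exact functor of triangulated
categories.  For all `σ, τ ∈ Stab(T_L)_p` one has `d(p_* σ, p_* τ) ≤ d(σ, τ)` in
`[0, ∞]`; in particular the pushforward map `p_* : Stab(T_L)_p → Stab(T)` is
continuous with respect to the topologies induced by the generalized metrics. -/
theorem statement_0
    {C : Type u} [Category.{v} C] [Preadditive C] [HasZeroObject C] [HasShift C ℤ]
    [∀ n : ℤ, (shiftFunctor C n).Additive] [Pretriangulated C] [HasFiniteBiproducts C]
    {D : Type u₂} [Category.{v₂} D] [Preadditive D] [HasZeroObject D] [HasShift D ℤ]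
    [∀ n : ℤ, (shiftFunctor D n).Additive] [Pretriangulated D] [HasFiniteBiproducts D]
    (p : C ⥤ D) [p.CommShift ℤ] [p.IsTriangulated] :
    (∀ σ τ : Stab D, IsStabilityCondition (pushforward p σ.1) →
      IsStabilityCondition (pushforward p τ.1) →
      stabDist (pushforward p σ.1) (pushforward p τ.1) ≤ stabDist σ.1 τ.1) ∧
    Continuous (fun σ : {σ : Stab D // IsStabilityCondition (pushforward p σ.1)} =>
      (⟨pushforward p σ.1.1, σ.2⟩ : Stab C)) := by
  have part1 : ∀ σ τ : Stab D, IsStabilityCondition (pushforward p σ.1) →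
      IsStabilityCondition (pushforward p τ.1) →
      stabDist (pushforward p σ.1) (pushforward p τ.1) ≤ stabDist σ.1 τ.1 :=
    fun σ τ hσp hτp => pushforward_dist_le p σ τ hσp hτp
  refine ⟨part1, ?_⟩
  refine continuous_generateFrom_iff.mpr ?_
  rintro U ⟨ρ, r, rfl⟩
  have hpre : (fun σ : {σ : Stab D // IsStabilityCondition (pushforward p σ.1)} =>
      (⟨pushforward p σ.1.1, σ.2⟩ : Stab C)) ⁻¹' {τC : Stab C | stabDist ρ.1 τC.1 < r} =
      Subtype.val ⁻¹' (⋃ (σ₀ : {σ : Stab D // IsStabilityCondition (pushforward p σ.1)})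
        (_ : stabDist ρ.1 (pushforward p σ₀.1.1) < r),
        {τ : Stab D | stabDist σ₀.1.1 τ.1 < r - stabDist ρ.1 (pushforward p σ₀.1.1)}) := by
    ext σ'
    simp only [Set.mem_preimage, Set.mem_setOf_eq, Set.mem_iUnion]
    constructor
    · intro hσ'
      refine ⟨σ', hσ', ?_⟩
      rw [stabDist_self]
      exact tsub_pos_iff_lt.mpr hσ'
    · rintro ⟨σ₀, h₀, hball⟩
      have tri := stabDist_triangle ρ.1 (pushforward p σ₀.1.1) (pushforward p σ'.1.1)
        (fun F hF => mass_ne_zero σ₀.2 hF)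
      have mono := part1 σ₀.1 σ'.1 σ₀.2 σ'.2
      calc stabDist ρ.1 (pushforward p σ'.1.1)
          ≤ stabDist ρ.1 (pushforward p σ₀.1.1) +
            stabDist (pushforward p σ₀.1.1) (pushforward p σ'.1.1) := tri
        _ ≤ stabDist ρ.1 (pushforward p σ₀.1.1) + stabDist σ₀.1.1 σ'.1.1 :=
            add_le_add_right mono _
        _ < stabDist ρ.1 (pushforward p σ₀.1.1) +
            (r - stabDist ρ.1 (pushforward p σ₀.1.1)) :=
            ENNReal.add_lt_add_left h₀.ne_top hball
        _ = r := add_tsub_cancel_of_le h₀.le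
  rw [hpre]
  refine (isOpen_iUnion (fun σ₀ => isOpen_iUnion (fun h₀ => ?_))).preimage
    continuous_subtype_val
  exact TopologicalSpace.isOpen_generateFrom_of_mem
    ⟨σ₀.1, r - stabDist ρ.1 (pushforward p σ₀.1.1), rfl⟩

end StabilityPaper
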